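/- Let A be an infinite totally ordered set. For every n ≥ 1 and every sequence d₁,...,d_{n−1} ∈ ℕ₀ ∪ {∞}, there exists a nondecreasing tuple a₁ ≤ ... ≤ aₙ in the lexicographic product A × ℤ with dist(aᵢ, aᵢ₊₁) = dᵢ for all 1 ≤ i ≤ n−1. -/

import Mathlib

/-- The distance in a linear order: `0` if the points are equal, otherwise the
number of strictly intermediate points plus one, as an element of `ℕ∞`. -/
noncomputable def odist {α : Type*} [LinearOrder α] (x y : α) : ℕ∞ :=
  if x = y then 0 else (Set.Ioo (min x y) (max x y)).encard + 1

/-- In the lexicographic product of an infinite linear order `A` with `ℤ`, every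
prescribed finite-or-infinite sequence of consecutive distances is realized by
some nondecreasing tuple. -/
lemma odist_lex_fin {A : Type*} [LinearOrder A] (x : A) (m : ℤ) (k : ℕ) :
    odist (toLex (x, m) : A ×ₗ ℤ) (toLex (x, m + k)) = k := by
  rcases Nat.eq_zero_or_pos k with hk | hk
  · subst hk; simp [odist]
  · have hne : (toLex (x, m) : A ×ₗ ℤ) ≠ toLex (x, m + k) := by
      intro h
      have : m = m + k := congrArg (fun p => (ofLex p).2) h
      omega
    have hle : (toLex (x, m) : A ×ₗ ℤ) ≤ toLex (x, m + k) := by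
      rw [Prod.Lex.le_iff]; right; exact ⟨rfl, by show m ≤ m + k; omega⟩
    rw [odist, if_neg hne, min_eq_left hle, max_eq_right hle]
    have himg : Set.Ioo (toLex (x, m) : A ×ₗ ℤ) (toLex (x, m + k))
        = (fun z : ℤ => (toLex (x, z) : A ×ₗ ℤ)) '' Set.Ioo m (m + k) := by
      ext p
      obtain ⟨y, z⟩ := p
      change toLex (y, z) ∈ _ ↔ toLex (y, z) ∈ _
      simp only [Set.mem_Ioo, Set.mem_image]
      constructor
      · rintro ⟨h1, h2⟩
        rw [show (⟨y, z⟩ : A ×ₗ ℤ) = toLex (y, z) from rfl] at h1 h2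
        rw [Prod.Lex.lt_iff] at h1 h2
        simp only [ofLex_toLex] at h1 h2
        rcases h1 with h1 | ⟨h1e, h1z⟩
        · rcases h2 with h2 | ⟨h2e, _⟩
          · exact absurd (h1.trans h2) (lt_irrefl x)
          · exact absurd (h2e ▸ h1) (lt_irrefl x)
        · rcases h2 with h2 | ⟨h2e, h2z⟩
          · exact absurd (h1e ▸ h2) (lt_irrefl x)
          · exact ⟨z, ⟨h1z, h2z⟩, by rw [h1e]; rfl⟩
      · rintro ⟨z', ⟨hz1, hz2⟩, hz⟩
        rw [← hz]
        constructor <;> rw [Prod.Lex.lt_iff] <;> right <;> exact ⟨rfl, by assumption⟩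
    have hinj : Function.Injective (fun z : ℤ => (toLex (x, z) : A ×ₗ ℤ)) := by
      intro a b h
      simpa using congrArg (fun p => (ofLex p).2) h
    rw [himg, hinj.encard_image]
    rw [← Finset.coe_Ioo, Set.encard_coe_eq_coe_finsetCard]
    rw [Int.card_Ioo]
    have : (m + k - m - 1).toNat = k - 1 := by omega
    rw [this]
    have : ((k - 1 : ℕ) : ℕ∞) + 1 = ((k - 1 + 1 : ℕ) : ℕ∞) := by push_cast; ring
    rw [this]
    congr 1
    omega

lemma odist_lex_top {A : Type*} [LinearOrder A] {x y : A} (hxy : x < y) (m m' : ℤ) :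
    odist (toLex (x, m) : A ×ₗ ℤ) (toLex (y, m')) = ⊤ := by
  have hne : (toLex (x, m) : A ×ₗ ℤ) ≠ toLex (y, m') := by
    intro h
    exact absurd (congrArg (fun p => (ofLex p).1) h) hxy.ne
  have hlt : (toLex (x, m) : A ×ₗ ℤ) < toLex (y, m') := by
    rw [Prod.Lex.lt_iff]; left; exact hxy
  rw [odist, if_neg hne, min_eq_left hlt.le, max_eq_right hlt.le]
  have hinf : (Set.Ioo (toLex (x, m) : A ×ₗ ℤ) (toLex (y, m'))).encard = ⊤ := by
    apply Set.Infinite.encard_eq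
    apply Set.infinite_of_injective_forall_mem
      (f := fun k : ℕ => (toLex (x, m + 1 + k) : A ×ₗ ℤ))
    · intro a b h
      have := congrArg (fun p => (ofLex p).2) h
      simpa using this
    · intro k
      constructor
      · rw [Prod.Lex.lt_iff]; right; exact ⟨rfl, by show m < m + 1 + k; omega⟩
      · rw [Prod.Lex.lt_iff]; left; exact hxy
  rw [hinf]
  rfl

theorem exists_monotone_tuple_with_prescribed_dists
    (A : Type*) [LinearOrder A] [Infinite A]
    (n : ℕ) (d : Fin n → ℕ∞) :
    ∃ a : Fin (n + 1) → A ×ₗ ℤ, Monotone a ∧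
      ∀ i : Fin n, odist (a i.castSucc) (a i.succ) = d i := by
  classical
  -- extend d to ℕ
  set d' : ℕ → ℕ∞ := fun i => if h : i < n then d ⟨i, h⟩ else 0 with hd'
  set c : ℕ → ℕ := fun i => ((Finset.range i).filter (fun j => d' j = ⊤)).card with hc
  set s : ℕ → ℤ := fun i => ∑ j ∈ Finset.range i, ((d' j).toNat : ℤ) with hs
  have hcle : ∀ i, c i ≤ i := fun i =>
    (Finset.card_filter_le _ _).trans (by simp)
  have hcstep : ∀ i, c (i + 1) = c i + (if d' i = ⊤ then 1 else 0) := by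
    intro i
    simp only [hc, Finset.range_add_one, Finset.filter_insert]
    split
    · rw [Finset.card_insert_of_notMem (by simp)]
    · simp
  have hsstep : ∀ i, s (i + 1) = s i + ((d' i).toNat : ℤ) := by
    intro i
    simp only [hs, Finset.sum_range_succ]
  -- an increasing (n+1)-chain in A
  obtain ⟨t, ht⟩ : ∃ t : Finset A, t.card = n + 1 :=
    ⟨(Finset.range (n+1)).map (Infinite.natEmbedding A), by simp⟩
  set e : Fin (n + 1) ↪o A := t.orderEmbOfFin ht with he
  set g : ℕ → A := fun i => e ⟨min (c i) n, Nat.lt_succ_of_le (min_le_right _ _)⟩ with hg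
  refine ⟨fun i => toLex (g i.val, s i.val), ?_, ?_⟩
  · apply Fin.monotone_iff_le_succ.mpr
    intro i
    simp only [Fin.coe_castSucc, Fin.val_succ]
    by_cases hdi : d' i.val = ⊤
    · have h1 : min (c i.val) n < min (c (i.val + 1)) n := by
        have := hcstep i.val
        rw [if_pos hdi] at this
        have h2 := hcle i.val
        have h3 : i.val + 1 ≤ n := i.isLt
        omega
      rw [Prod.Lex.le_iff]
      left
      exact e.strictMono (by exact h1)
    · have h1 : c (i.val + 1) = c i.val := by
        have := hcstep i.val; rw [if_neg hdi] at this; omega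
      rw [Prod.Lex.le_iff]
      right
      refine ⟨by simp [hg, h1], ?_⟩
      rw [hsstep]
      have : (0:ℤ) ≤ ((d' i.val).toNat : ℤ) := by positivity
      show s i.val ≤ s i.val + ((d' i.val).toNat : ℤ)
      omega
  · intro i
    simp only [Fin.coe_castSucc, Fin.val_succ]
    have hdi' : d' i.val = d i := by simp [hd', i.isLt]
    by_cases hdi : d i = ⊤
    · have h1 : min (c i.val) n < min (c (i.val + 1)) n := by
        have := hcstep i.val
        rw [if_pos (hdi' ▸ hdi)] at this
        have h2 := hcle i.val
        have h3 : i.val + 1 ≤ n := i.isLt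
        omega
      rw [odist_lex_top (e.strictMono h1) _ _, hdi]
    · have h1 : min (c (i.val + 1)) n = min (c i.val) n := by
        have := hcstep i.val
        rw [if_neg (hdi' ▸ hdi)] at this
        omega
      have hgeq : g (i.val + 1) = g i.val := by simp [hg, h1]
      have hseq : s (i.val + 1) = s i.val + ((d i).toNat : ℤ) := by
        rw [hsstep, hdi']
      rw [hgeq, hseq]
      rw [odist_lex_fin (g i.val) (s i.val) (d i).toNat]
      exact ENat.coe_toNat hdi
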